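/- Let S ∈ ℝ^{n×n} have full rank, let x⁰ ∈ ℝⁿ, and define U_0 = S. Then the set {x⁰} ∪ {x⁰+sⁱ}ᵢ ∪ {x⁰+2sⁱ}ᵢ ∪ {x⁰+sⁱ+sʲ}_{i<j} is poised for quadratic interpolation: if a quadratic Q(x) = α₀ + αᵀx + ½xᵀHx with H symmetric vanishes at all these (n+1)(n+2)/2 points, then α₀ = 0, α = 0, and H = 0. -/

import Mathlib

open Matrix

/-- If a vector is orthogonal to every element of a basis of `Fin n → ℝ`, it is zero. -/
lemma dot_zero_of_basis {n : ℕ} (b : Module.Basis (Fin n) ℝ (Fin n → ℝ)) (v : Fin n → ℝ)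
    (h : ∀ i, b i ⬝ᵥ v = 0) : v = 0 := by
  let f : (Fin n → ℝ) →ₗ[ℝ] ℝ :=
    { toFun := fun w => w ⬝ᵥ v
      map_add' := fun x y => add_dotProduct x y v
      map_smul' := fun c x => smul_dotProduct c x v }
  have hf : f = 0 := b.ext (fun i => by simpa [f] using h i)
  have : v ⬝ᵥ v = 0 := by
    have := congrArg (fun g => g v) hf
    simpa [f] using this
  exact dotProduct_self_eq_zero.mp this

/-- with S full rank and U₀ = S, the set
{x⁰} ∪ {x⁰+sⁱ} ∪ {x⁰+2sⁱ} ∪ {x⁰+sⁱ+sʲ}_{i<j} is poised for quadratic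
interpolation: any quadratic with symmetric Hessian vanishing on it is zero. -/
theorem minimal_set_U0_poised_for_QI {n : ℕ}
    (x0 : Fin n → ℝ) (s : Fin n → (Fin n → ℝ)) (hs : LinearIndependent ℝ s)
    (a0 : ℝ) (a : Fin n → ℝ) (H : Matrix (Fin n) (Fin n) ℝ) (hH : H.IsSymm)
    (Q : (Fin n → ℝ) → ℝ)
    (hQ : ∀ x, Q x = a0 + a ⬝ᵥ x + (1 / 2) * (x ⬝ᵥ H.mulVec x))
    (h0 : Q x0 = 0)
    (h1 : ∀ i, Q (x0 + s i) = 0)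
    (h2 : ∀ i, Q (x0 + s i + s i) = 0)
    (h3 : ∀ i j, i < j → Q (x0 + s i + s j) = 0) :
    a0 = 0 ∧ a = 0 ∧ H = 0 := by
  classical
  have hspan : ⊤ ≤ Submodule.span ℝ (Set.range s) := by
    apply le_of_eq
    symm
    apply Submodule.eq_top_of_finrank_eq
    rw [finrank_span_eq_card hs]
    simp
  let b : Module.Basis (Fin n) ℝ (Fin n → ℝ) := Module.Basis.mk hs hspan
  have hb : ∀ i, b i = s i := fun i => by simp [b]
  -- symmetry of the bilinear form
  have symm : ∀ u v : Fin n → ℝ, u ⬝ᵥ H.mulVec v = v ⬝ᵥ H.mulVec u := by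
    intro u v
    rw [dotProduct_mulVec, ← mulVec_transpose, hH.eq, dotProduct_comm]
  -- translated expansion
  obtain ⟨L, hL⟩ : ∃ L : (Fin n → ℝ) → ℝ, ∀ u, L u = a ⬝ᵥ u + u ⬝ᵥ H.mulVec x0 :=
    ⟨_, fun _ => rfl⟩
  have key : ∀ u, Q (x0 + u) = Q x0 + L u + (1 / 2) * (u ⬝ᵥ H.mulVec u) := by
    intro u
    simp only [hQ, hL, mulVec_add, dotProduct_add, add_dotProduct]
    linear_combination (1 / 2 : ℝ) * symm x0 u
  have hQ0 : Q x0 = 0 := h0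
  -- from h1, h2: diagonal entries and L vanish
  have hdiagL : ∀ i, L (s i) = 0 ∧ s i ⬝ᵥ H.mulVec (s i) = 0 := by
    intro i
    have e1 := h1 i
    have e2 := h2 i
    rw [key (s i), hQ0] at e1
    have e2' : Q (x0 + (s i + s i)) = 0 := by rw [← add_assoc]; exact e2
    rw [key (s i + s i), hQ0] at e2'
    have hLadd : L (s i + s i) = 2 * L (s i) := by
      simp only [hL, mulVec_add, dotProduct_add, add_dotProduct]; ring
    have hBadd : (s i + s i) ⬝ᵥ H.mulVec (s i + s i) = 4 * (s i ⬝ᵥ H.mulVec (s i)) := by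
      simp only [mulVec_add, dotProduct_add, add_dotProduct]; ring
    rw [hLadd, hBadd] at e2'
    constructor <;> linarith
  -- off-diagonal entries vanish
  have hB : ∀ i j, s i ⬝ᵥ H.mulVec (s j) = 0 := by
    have hlt : ∀ i j, i < j → s i ⬝ᵥ H.mulVec (s j) = 0 := by
      intro i j hij
      have e3 : Q (x0 + (s i + s j)) = 0 := by rw [← add_assoc]; exact h3 i j hij
      rw [key (s i + s j), hQ0] at e3
      have hLadd : L (s i + s j) = L (s i) + L (s j) := by
        simp only [hL, mulVec_add, dotProduct_add, add_dotProduct]; ring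
      have hBadd : (s i + s j) ⬝ᵥ H.mulVec (s i + s j) =
          s i ⬝ᵥ H.mulVec (s i) + s j ⬝ᵥ H.mulVec (s j) + 2 * (s i ⬝ᵥ H.mulVec (s j)) := by
        have := symm (s i) (s j)
        simp only [mulVec_add, dotProduct_add, add_dotProduct]
        linarith
      rw [hLadd, hBadd, (hdiagL i).1, (hdiagL j).1, (hdiagL i).2, (hdiagL j).2] at e3
      linarith
    intro i j
    rcases lt_trichotomy i j with h | h | h
    · exact hlt i j h
    · rw [h]; exact (hdiagL j).2
    · rw [symm]; exact hlt j i h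
  -- H = 0
  have hHv : ∀ j, H.mulVec (s j) = 0 := fun j =>
    dot_zero_of_basis b _ (fun i => by rw [hb]; exact hB i j)
  have hHall : ∀ v, H.mulVec v = 0 := by
    intro v
    have : H.mulVecLin = 0 := b.ext (fun i => by simpa [hb] using hHv i)
    have := congrArg (fun g => g v) this
    simpa using this
  have hH0 : H = 0 := by
    ext i j
    have := congrFun (hHall (Pi.single j 1)) i
    simpa using this
  -- a = 0
  have haS : ∀ i, s i ⬝ᵥ a = 0 := by
    intro i
    have := (hdiagL i).1
    rw [hL] at this
    simp only [hH0, zero_mulVec, dotProduct_zero, add_zero] at this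
    rwa [dotProduct_comm] at this
  have ha0 : a = 0 := dot_zero_of_basis b a (fun i => by rw [hb]; exact haS i)
  -- a0 = 0
  have : a0 = 0 := by
    have := hQ x0
    rw [h0, ha0, hH0] at this
    simpa using this.symm
  exact ⟨this, ha0, hH0⟩
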